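/- Let $X$ be an $n$-dimensional complex Banach space with an absolute norm such that $X$ is a CL-space, and suppose that the closed unit ball $B_X$ has exactly one extreme point all of whose coordinates are nonnegative real numbers. Then $X$ is isometrically isomorphic to $\ell_\infty^n$. -/

import Mathlib

/-- an `n`-dimensional complex CL-space with an absolute norm
whose unit ball has exactly one extreme point with all coordinates nonnegative
reals is isometrically isomorphic to `ℓ∞ⁿ`. -/
theorem stmt_13 (n : ℕ) (N : (Fin n → ℂ) → ℝ)
    (hadd : ∀ x y : Fin n → ℂ, N (x + y) ≤ N x + N y)
    (hsmul : ∀ (c : ℂ) (x : Fin n → ℂ), N (c • x) = ‖c‖ * N x)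
    (habs : ∀ x : Fin n → ℂ, N x = N (fun j => (‖x j‖ : ℂ)))
    (hunit : ∀ j : Fin n, N ((Pi.single j 1 : Fin n → ℂ)) = 1)
    (hdef : ∀ x : Fin n → ℂ, N x = 0 → x = 0)
    -- the dual norm
    (Nd : (Fin n → ℂ) → ℝ)
    (hNd : ∀ f : Fin n → ℂ,
      Nd f = sSup {r : ℝ | ∃ x : Fin n → ℂ, N x ≤ 1 ∧ r = ‖∑ j, f j * x j‖})
    -- `X` is a CL-space
    (hCL : ∀ f ∈ Set.extremePoints ℝ {g : Fin n → ℂ | Nd g ≤ 1},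
      ∀ x ∈ Set.extremePoints ℝ {x : Fin n → ℂ | N x ≤ 1}, ‖∑ j, f j * x j‖ = 1)
    -- exactly one extreme point of the unit ball has all coordinates nonnegative reals
    (huniq : ∃! x : Fin n → ℂ, x ∈ Set.extremePoints ℝ {z : Fin n → ℂ | N z ≤ 1} ∧
      ∀ j, ∃ r : ℝ, 0 ≤ r ∧ x j = (r : ℂ)) :
    -- `X` is isometric to `ℓ∞ⁿ` (`Fin n → ℂ` with the sup norm)
    ∃ T : (Fin n → ℂ) ≃ₗ[ℂ] (Fin n → ℂ), ∀ x : Fin n → ℂ, N x = ‖T x‖ := by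
  classical
  refine ⟨LinearEquiv.refl ℂ _, ?_⟩
  simp only [LinearEquiv.refl_apply]
  -- trivial case n = 0
  rcases Nat.eq_zero_or_pos n with hn0 | hnpos
  · subst hn0
    intro x
    have hx : x = 0 := funext fun j => j.elim0
    subst hx
    have h0 : N 0 = 0 := by simpa using hsmul 0 0
    rw [h0, norm_zero]
  -- basic properties of N
  have hN0 : N 0 = 0 := by simpa using hsmul 0 0
  have hNneg : ∀ x, N (-x) = N x := by
    intro x
    have := hsmul (-1) x
    simpa using this
  have hNnonneg : ∀ x, 0 ≤ N x := by
    intro x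
    have h := hadd x (-x)
    rw [add_neg_cancel, hN0, hNneg] at h
    linarith
  have hRsmul : ∀ (a : ℝ) (x : Fin n → ℂ), N (a • x) = |a| * N x := by
    intro a x
    have h1 : a • x = (a : ℂ) • x := by
      funext j
      simp [Complex.real_smul]
    rw [h1, hsmul]
    simp [Complex.norm_real]
  have hcongr : ∀ x y : Fin n → ℂ, (∀ j, ‖x j‖ = ‖y j‖) → N x = N y := by
    intro x y h
    rw [habs x, habs y]
    congr 1
    funext j
    rw [h j]
  -- replacement lemma: shrinking the modulus of one coordinate does not increase N
  have hrepl : ∀ (y : Fin n → ℂ) (j : Fin n) (c : ℂ), ‖c‖ ≤ ‖y j‖ →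
      N (Function.update y j c) ≤ N y := by
    intro y j c hc
    rcases eq_or_lt_of_le (norm_nonneg (y j)) with hy0 | hy0
    · -- y j = 0, then c = 0
      have hyj : y j = 0 := by
        have : ‖y j‖ = 0 := hy0.symm
        simpa using this
      have hc0 : c = 0 := by
        have : ‖c‖ ≤ 0 := by rw [← hy0] at hc; exact hc
        simpa using le_antisymm this (norm_nonneg c)
      rw [hc0, ← hyj, Function.update_eq_self]
    · set R : ℝ := ‖y j‖ with hR
      set w : ℂ := if c = 0 then (R : ℂ) else (R / ‖c‖ : ℝ) • c with hw
      have hwnorm : ‖w‖ = R := by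
        rcases eq_or_ne c 0 with rfl | hcne
        · simp [hw, abs_of_nonneg (le_of_lt hy0)]
        · have : ‖c‖ > 0 := norm_pos_iff.2 hcne
          simp only [hw, if_neg hcne, norm_smul, Real.norm_eq_abs]
          rw [abs_of_nonneg (by positivity), div_mul_cancel₀]
          exact this.ne'
      set s : ℝ := ‖c‖ / R with hs
      have hs01 : 0 ≤ s ∧ s ≤ 1 := by
        constructor
        · positivity
        · rw [hs, div_le_one hy0]; exact hc
      have hcw : c = s • w := by
        rcases eq_or_ne c 0 with rfl | hcne
        · simp [hs]
        · have hcnorm : ‖c‖ ≠ 0 := norm_ne_zero_iff.2 hcne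
          simp only [hw, if_neg hcne, smul_smul]
          have h1 : s * (R / ‖c‖) = 1 := by
            rw [hs]
            field_simp
          rw [h1, one_smul]
      set a : ℝ := (1 + s) / 2 with ha
      set b : ℝ := (1 - s) / 2 with hb
      have hab : a + b = 1 := by rw [ha, hb]; ring
      have hupd : Function.update y j c
          = a • Function.update y j w + b • Function.update y j (-w) := by
        funext k
        rcases eq_or_ne k j with rfl | hk
        · simp only [Function.update_self, Pi.add_apply, Pi.smul_apply]
          have hab' : a - b = s := by rw [ha, hb]; ring
          rw [hcw, smul_neg, ← sub_eq_add_neg, ← sub_smul, hab']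
        · simp only [Function.update_of_ne hk, Pi.add_apply, Pi.smul_apply]
          rw [← add_smul, hab, one_smul]
      have hNw : N (Function.update y j w) = N y := by
        apply hcongr
        intro k
        rcases eq_or_ne k j with rfl | hk
        · rw [Function.update_self, hwnorm]
        · simp [Function.update_of_ne hk]
      have hNw' : N (Function.update y j (-w)) = N y := by
        apply hcongr
        intro k
        rcases eq_or_ne k j with rfl | hk
        · rw [Function.update_self, norm_neg, hwnorm]
        · simp [Function.update_of_ne hk]
      calc N (Function.update y j c)
          = N (a • Function.update y j w + b • Function.update y j (-w)) := by rw [hupd]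
        _ ≤ N (a • Function.update y j w) + N (b • Function.update y j (-w)) := hadd _ _
        _ = |a| * N y + |b| * N y := by rw [hRsmul, hRsmul, hNw, hNw']
        _ = N y := by
            rw [abs_of_nonneg (by rw [ha]; linarith [hs01.1]),
              abs_of_nonneg (by rw [hb]; linarith [hs01.2])]
            rw [← add_mul, hab, one_mul]
  -- monotonicity
  have hmono : ∀ (y x : Fin n → ℂ), (∀ j, ‖x j‖ ≤ ‖y j‖) → N x ≤ N y := by
    intro y x hxy
    have key : ∀ s : Finset (Fin n), N (fun k => if k ∈ s then x k else y k) ≤ N y := by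
      intro s
      induction s using Finset.induction_on with
      | empty => simp
      | @insert j s hj ih =>
        have heq : (fun k => if k ∈ insert j s then x k else y k)
            = Function.update (fun k => if k ∈ s then x k else y k) j (x j) := by
          funext k
          rcases eq_or_ne k j with rfl | hk
          · simp
          · simp [Function.update_of_ne hk, Finset.mem_insert, hk]
        rw [heq]
        refine le_trans (hrepl _ _ _ ?_) ih
        simpa [hj] using hxy j
    have := key Finset.univ
    simpa using this
  -- N is bounded above by the sum of coordinate norms
  have hNsumle : ∀ x : Fin n → ℂ, N x ≤ ∑ j, ‖x j‖ := by
    intro x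
    have hdec : x = ∑ j, Pi.single j (x j) := by
      rw [Finset.univ_sum_single]
    have hkey : ∀ s : Finset (Fin n), N (∑ j ∈ s, Pi.single j (x j)) ≤ ∑ j ∈ s, ‖x j‖ := by
      intro s
      induction s using Finset.induction_on with
      | empty => simp [hN0]
      | @insert j s hj ih =>
        rw [Finset.sum_insert hj, Finset.sum_insert hj]
        refine le_trans (hadd _ _) ?_
        have h1 : N (Pi.single j (x j)) = ‖x j‖ := by
          have h2 : (Pi.single j (x j) : Fin n → ℂ) = (x j) • (Pi.single j 1 : Fin n → ℂ) := by
            funext k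
            rcases eq_or_ne k j with rfl | hk
            · simp
            · simp [Pi.single_eq_of_ne hk]
          rw [h2, hsmul, hunit, mul_one]
        rw [h1]
        exact add_le_add_right ih _
    calc N x = N (∑ j, Pi.single j (x j)) := by rw [← hdec]
      _ ≤ ∑ j, ‖x j‖ := hkey Finset.univ
  -- continuity of N
  have hNcont : Continuous N := by
    have hlip : ∀ x y : Fin n → ℂ, dist (N x) (N y) ≤ (n : ℝ) * dist x y := by
      intro x y
      rw [Real.dist_eq, abs_sub_le_iff]
      have hxy : ∀ x y : Fin n → ℂ, N x - N y ≤ (n : ℝ) * dist x y := by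
        intro x y
        have h1 : N x ≤ N (x - y) + N y := by
          have := hadd (x - y) y
          simpa using this
        have h2 : N (x - y) ≤ ∑ j : Fin n, ‖(x - y) j‖ := hNsumle _
        have h3 : ∑ j : Fin n, ‖(x - y) j‖ ≤ ∑ _j : Fin n, ‖x - y‖ :=
          Finset.sum_le_sum fun j _ => norm_le_pi_norm (x - y) j
        have h4 : ∑ _j : Fin n, ‖x - y‖ = (n : ℝ) * ‖x - y‖ := by
          simp [Finset.sum_const, nsmul_eq_mul]
        rw [dist_eq_norm]
        linarith
      refine ⟨hxy x y, ?_⟩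
      rw [dist_comm]
      exact hxy y x
    exact (LipschitzWith.of_dist_le_mul (K := ⟨n, Nat.cast_nonneg n⟩)
      (by exact_mod_cast hlip)).continuous
  -- lower bound: m * ‖x‖ ≤ N x with m > 0
  obtain ⟨m, hmpos, hmlow⟩ : ∃ m : ℝ, 0 < m ∧ ∀ x : Fin n → ℂ, m * ‖x‖ ≤ N x := by
    have hne : (Metric.sphere (0 : Fin n → ℂ) 1).Nonempty := by
      haveI : Nonempty (Fin n) := ⟨⟨0, hnpos⟩⟩
      refine ⟨fun _ => 1, ?_⟩
      simp [Metric.mem_sphere, dist_eq_norm, pi_norm_const]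
    obtain ⟨x₀, hx₀s, hx₀min⟩ := (isCompact_sphere (0 : Fin n → ℂ) 1).exists_isMinOn
      hne hNcont.continuousOn
    have hx₀norm : ‖x₀‖ = 1 := by simpa [dist_eq_norm] using hx₀s
    have hx₀ne : x₀ ≠ 0 := by
      intro h
      rw [h, norm_zero] at hx₀norm
      norm_num at hx₀norm
    have hmpos : 0 < N x₀ := by
      rcases lt_or_eq_of_le (hNnonneg x₀) with h | h
      · exact h
      · exact absurd (hdef x₀ h.symm) hx₀ne
    refine ⟨N x₀, hmpos, fun x => ?_⟩
    rcases eq_or_ne x 0 with rfl | hx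
    · simp [hN0, hNnonneg]
    · have hxn : (0 : ℝ) < ‖x‖ := norm_pos_iff.2 hx
      have hsx : (‖x‖⁻¹ : ℝ) • x ∈ Metric.sphere (0 : Fin n → ℂ) 1 := by
        simp [Metric.mem_sphere, dist_eq_norm, norm_smul, abs_of_pos (inv_pos.2 hxn),
          inv_mul_cancel₀ hxn.ne']
      have := hx₀min hsx
      have heq : N ((‖x‖⁻¹ : ℝ) • x) = ‖x‖⁻¹ * N x := by
        rw [hRsmul, abs_of_pos (inv_pos.2 hxn)]
      rw [Set.mem_setOf_eq] at this
      rw [heq] at this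
      calc N x₀ * ‖x‖ ≤ (‖x‖⁻¹ * N x) * ‖x‖ := by nlinarith
        _ = N x := by field_simp
  -- the unit ball is compact and convex
  set B : Set (Fin n → ℂ) := {z : Fin n → ℂ | N z ≤ 1} with hBdef
  have hBconv : Convex ℝ B := by
    intro x hx y hy a b ha hb hab
    have h1 : N (a • x + b • y) ≤ |a| * N x + |b| * N y := by
      refine le_trans (hadd _ _) ?_
      rw [hRsmul, hRsmul]
    have hx' : N x ≤ 1 := hx
    have hy' : N y ≤ 1 := hy
    have : N (a • x + b • y) ≤ 1 := by
      rw [abs_of_nonneg ha, abs_of_nonneg hb] at h1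
      nlinarith [hNnonneg x, hNnonneg y]
    exact this
  have hBclosed : IsClosed B := by
    have : B = N ⁻¹' Set.Iic 1 := rfl
    rw [this]
    exact IsClosed.preimage hNcont isClosed_Iic
  have hBcomp : IsCompact B := by
    refine IsCompact.of_isClosed_subset (isCompact_closedBall (0 : Fin n → ℂ) m⁻¹)
      hBclosed ?_
    intro x hx
    have hx' : N x ≤ 1 := hx
    have := hmlow x
    rw [Metric.mem_closedBall, dist_eq_norm, sub_zero]
    have h2 : m * ‖x‖ ≤ 1 := le_trans (hmlow x) hx'
    nlinarith [inv_pos.2 hmpos, mul_inv_cancel₀ hmpos.ne', norm_nonneg x]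
  -- Krein-Milman
  have hKM : closure (convexHull ℝ (B.extremePoints ℝ)) = B :=
    closure_convexHull_extremePoints hBcomp hBconv
  obtain ⟨u, ⟨huext, hucoord⟩, huuniq⟩ := huniq
  -- the modulus vector of an extreme point is an extreme point
  have habs_ext : ∀ z ∈ Set.extremePoints ℝ B,
      (fun j => (‖z j‖ : ℂ)) ∈ Set.extremePoints ℝ B := by
    intro z hz
    set θ : Fin n → ℂ := fun j => if z j = 0 then 1 else (‖z j‖ : ℂ) / z j with hθ
    set θ' : Fin n → ℂ := fun j => if z j = 0 then 1 else z j / (‖z j‖ : ℂ) with hθ'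
    have hθθ' : ∀ j, θ j * θ' j = 1 := by
      intro j
      rcases eq_or_ne (z j) 0 with h | h
      · simp [hθ, hθ', h]
      · have hnz : (‖z j‖ : ℂ) ≠ 0 := by
          simpa using norm_ne_zero_iff.2 h
        simp only [hθ, hθ', if_neg h]
        field_simp
    have hθnorm : ∀ j, ‖θ j‖ = 1 := by
      intro j
      rcases eq_or_ne (z j) 0 with h | h
      · simp [hθ, h]
      · simp [hθ, h, norm_div, Complex.norm_real, abs_norm,
          div_self (norm_ne_zero_iff.2 h)]
    have hθ'norm : ∀ j, ‖θ' j‖ = 1 := by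
      intro j
      rcases eq_or_ne (z j) 0 with h | h
      · simp [hθ', h]
      · simp [hθ', h, norm_div, Complex.norm_real, abs_norm,
          div_self (norm_ne_zero_iff.2 h)]
    set R : (Fin n → ℂ) → (Fin n → ℂ) := fun x j => θ j * x j with hRdef
    set R' : (Fin n → ℂ) → (Fin n → ℂ) := fun x j => θ' j * x j with hR'def
    have hR'R : ∀ x, R' (R x) = x := by
      intro x
      funext j
      show θ' j * (θ j * x j) = x j
      rw [← mul_assoc, mul_comm (θ' j) (θ j), hθθ', one_mul]
    have hRR' : ∀ x, R (R' x) = x := by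
      intro x
      funext j
      show θ j * (θ' j * x j) = x j
      rw [← mul_assoc, hθθ', one_mul]
    have hNR : ∀ x, N (R x) = N x := by
      intro x
      exact hcongr _ _ fun j => by
        show ‖θ j * x j‖ = ‖x j‖
        rw [norm_mul, hθnorm, one_mul]
    have hNR' : ∀ x, N (R' x) = N x := by
      intro x
      exact hcongr _ _ fun j => by
        show ‖θ' j * x j‖ = ‖x j‖
        rw [norm_mul, hθ'norm, one_mul]
    have hRz : R z = fun j => (‖z j‖ : ℂ) := by
      funext j
      show θ j * z j = (‖z j‖ : ℂ)
      rcases eq_or_ne (z j) 0 with h | h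
      · simp [hθ, h]
      · simp only [hθ, if_neg h]
        exact div_mul_cancel₀ _ h
    rw [← hRz]
    rw [mem_extremePoints]
    constructor
    · show N (R z) ≤ 1
      rw [hNR]
      exact hz.1
    · rintro x₁ hx₁ x₂ hx₂ ⟨a, b, ha, hb, hab, heq⟩
      have hx₁' : R' x₁ ∈ B := by
        show N (R' x₁) ≤ 1
        rw [hNR']
        exact hx₁
      have hx₂' : R' x₂ ∈ B := by
        show N (R' x₂) ≤ 1
        rw [hNR']
        exact hx₂
      have hseg' : a • R' x₁ + b • R' x₂ = z := by
        have h1 : R' (a • x₁ + b • x₂) = a • R' x₁ + b • R' x₂ := by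
          funext j
          show θ' j * ((a • x₁ + b • x₂) j) = (a • R' x₁ + b • R' x₂) j
          simp only [Pi.add_apply, Pi.smul_apply]
          show θ' j * (a • x₁ j + b • x₂ j) = a • (θ' j * x₁ j) + b • (θ' j * x₂ j)
          rw [Complex.real_smul, Complex.real_smul, Complex.real_smul, Complex.real_smul]
          ring
        rw [← h1, heq, hR'R]
      have hres := hz.2 hx₁' hx₂' ⟨a, b, ha, hb, hab, hseg'⟩
      constructor
      · rw [← hRR' x₁, hres]
      · rw [← hRR' x₂, ((mem_extremePoints.1 hz).2 _ hx₁' _ hx₂' ⟨a, b, ha, hb, hab, hseg'⟩).2]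
  -- coordinates of extreme points have the same moduli as u
  have hcoordu : ∀ z ∈ Set.extremePoints ℝ B, ∀ j, ‖z j‖ = ‖u j‖ := by
    intro z hz j
    have h1 : (fun j => (‖z j‖ : ℂ)) = u :=
      huuniq _ ⟨habs_ext z hz, fun j => ⟨‖z j‖, norm_nonneg _, rfl⟩⟩
    have h2 := congrFun h1 j
    rw [← h2]
    simp [Complex.norm_real, abs_norm]
  -- the unit ball is contained in the polydisc
  have hBP : ∀ x ∈ B, ∀ j, ‖x j‖ ≤ ‖u j‖ := by
    have hPconv : Convex ℝ {x : Fin n → ℂ | ∀ j, ‖x j‖ ≤ ‖u j‖} := by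
      intro x hx y hy a b ha hb hab j
      calc ‖(a • x + b • y) j‖ ≤ ‖a • x j‖ + ‖b • y j‖ := by
            simp only [Pi.add_apply, Pi.smul_apply]
            exact norm_add_le _ _
        _ = |a| * ‖x j‖ + |b| * ‖y j‖ := by
            rw [norm_smul, norm_smul, Real.norm_eq_abs, Real.norm_eq_abs]
        _ ≤ a * ‖u j‖ + b * ‖u j‖ := by
            rw [abs_of_nonneg ha, abs_of_nonneg hb]
            exact add_le_add (mul_le_mul_of_nonneg_left (hx j) ha)
              (mul_le_mul_of_nonneg_left (hy j) hb)
        _ = ‖u j‖ := by rw [← add_mul, hab, one_mul]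
    have hPclosed : IsClosed {x : Fin n → ℂ | ∀ j, ‖x j‖ ≤ ‖u j‖} := by
      have hPeq : {x : Fin n → ℂ | ∀ j, ‖x j‖ ≤ ‖u j‖}
          = ⋂ j, {x : Fin n → ℂ | ‖x j‖ ≤ ‖u j‖} := by
        ext x
        simp
      rw [hPeq]
      exact isClosed_iInter fun j =>
        IsClosed.preimage ((continuous_apply j).norm) isClosed_Iic
    have hsub : Set.extremePoints ℝ B ⊆ {x : Fin n → ℂ | ∀ j, ‖x j‖ ≤ ‖u j‖} :=
      fun z hz j => le_of_eq (hcoordu z hz j)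
    have hfin : B ⊆ {x : Fin n → ℂ | ∀ j, ‖x j‖ ≤ ‖u j‖} := by
      rw [← hKM]
      exact closure_minimal (convexHull_min hsub hPconv) hPclosed
    exact fun x hx => hfin hx
  -- each coordinate of u has modulus 1
  have hu1 : ∀ j, ‖u j‖ = 1 := by
    intro j
    have hge : (1 : ℝ) ≤ ‖u j‖ := by
      have hej : (Pi.single j 1 : Fin n → ℂ) ∈ B := le_of_eq (hunit j)
      have := hBP _ hej j
      simpa using this
    have hle : ‖u j‖ ≤ 1 := by
      have hx : ∀ k, ‖((‖u j‖ : ℂ) • (Pi.single j 1 : Fin n → ℂ)) k‖ ≤ ‖u k‖ := by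
        intro k
        rcases eq_or_ne k j with rfl | hk
        · simp [Complex.norm_real, abs_norm]
        · simp [Pi.single_eq_of_ne hk]
      have h1 : N ((‖u j‖ : ℂ) • (Pi.single j 1 : Fin n → ℂ)) ≤ N u := hmono u _ hx
      have h2 : N ((‖u j‖ : ℂ) • (Pi.single j 1 : Fin n → ℂ)) = ‖u j‖ := by
        rw [hsmul, hunit, mul_one, Complex.norm_real, norm_norm]
      have hub : N u ≤ 1 := huext.1
      rw [h2] at h1
      linarith
    linarith
  -- conclusion: N is the sup norm
  intro x
  have hle : N x ≤ ‖x‖ := by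
    have hx : ∀ j, ‖x j‖ ≤ ‖((‖x‖ : ℂ) • u) j‖ := by
      intro j
      have h1 : ‖((‖x‖ : ℂ) • u) j‖ = ‖x‖ * ‖u j‖ := by
        simp [norm_smul, Complex.norm_real, abs_norm]
      rw [h1, hu1 j, mul_one]
      exact norm_le_pi_norm x j
    calc N x ≤ N ((‖x‖ : ℂ) • u) := hmono _ x hx
      _ = ‖x‖ * N u := by rw [hsmul, Complex.norm_real, norm_norm]
      _ ≤ ‖x‖ * 1 := mul_le_mul_of_nonneg_left huext.1 (norm_nonneg x)
      _ = ‖x‖ := mul_one _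
  have hge : ‖x‖ ≤ N x := by
    rw [pi_norm_le_iff_of_nonneg (hNnonneg x)]
    intro j
    rcases eq_or_ne x 0 with rfl | hx0
    · simp [hN0]
    · have ht : 0 < N x :=
        lt_of_le_of_ne (hNnonneg x) fun h => hx0 (hdef x h.symm)
      have hmem : ((N x)⁻¹ : ℝ) • x ∈ B := by
        show N (((N x)⁻¹ : ℝ) • x) ≤ 1
        rw [hRsmul, abs_of_pos (inv_pos.2 ht), inv_mul_cancel₀ ht.ne']
      have hco := hBP _ hmem j
      rw [hu1 j] at hco
      have h2 : ‖((((N x)⁻¹ : ℝ)) • x) j‖ = (N x)⁻¹ * ‖x j‖ := by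
        rw [Pi.smul_apply, norm_smul, Real.norm_eq_abs, abs_of_pos (inv_pos.2 ht)]
      rw [h2] at hco
      calc ‖x j‖ = N x * ((N x)⁻¹ * ‖x j‖) := by
            rw [← mul_assoc, mul_inv_cancel₀ ht.ne', one_mul]
        _ ≤ N x * 1 := mul_le_mul_of_nonneg_left hco ht.le
        _ = N x := mul_one _
  linarith
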